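/- For Δ ≥ D ≥ 2r+2, the diameter of Γ_Δ(D,−r) is at most D+r: from the vertex I = 12⋯D there is a directed path of length at most D+r to every vertex X. -/

import Mathlib

/-- `l` is a vertex of the cycle prefix digraph `Γ_Δ(D)`: a sequence of `D`
distinct letters from the alphabet `{1, …, Δ+1}`. -/
def IsVtx (Δ D : ℕ) (l : List ℕ) : Prop :=
  l.length = D ∧ l.Nodup ∧ ∀ x ∈ l, 1 ≤ x ∧ x ≤ Δ + 1

/-- Adjacency in `Γ_Δ(D, -r)` (for `r = 0` this is `Γ_Δ(D)` itself): arcs are the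
rotations `R_k` for `r+2 ≤ k ≤ D` (0-indexed: move the letter at index `j`,
`r+1 ≤ j ≤ D-1`, to the front) and the shifts `S_y` for letters `y` not in the
sequence. -/
def adjR (Δ D r : ℕ) (X Y : List ℕ) : Prop :=
  IsVtx Δ D X ∧ IsVtx Δ D Y ∧
    ((∃ j, r + 1 ≤ j ∧ j < D ∧ Y = X.getD j 0 :: X.eraseIdx j) ∨
     (∃ y, y ∉ X ∧ Y = y :: X.dropLast))

/-- `w` is a directed walk of length `n` from `u` to `v` in the digraph with
adjacency relation `A`. -/
def IsWalk {V : Type*} (A : V → V → Prop) (u v : V) (n : ℕ) (w : ℕ → V) : Prop :=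
  w 0 = u ∧ w n = v ∧ ∀ i < n, A (w i) (w (i + 1))

/-- Directed distance: the least length of a directed walk from `u` to `v`. -/
noncomputable def cpDist {V : Type*} (A : V → V → Prop) (u v : V) : ℕ :=
  sInf {n | ∃ w, IsWalk A u v n w}

/-! ### Walk helpers -/

def ReachN {V : Type*} (A : V → V → Prop) (u v : V) (n : ℕ) : Prop :=
  ∃ w, IsWalk A u v n w

lemma reachN_refl {V : Type*} (A : V → V → Prop) (u : V) : ReachN A u u 0 :=
  ⟨fun _ => u, rfl, rfl, fun i hi => absurd hi (Nat.not_lt_zero i)⟩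

lemma reachN_snoc {V : Type*} {A : V → V → Prop} {u v v' : V} {n : ℕ}
    (h : ReachN A u v n) (h' : A v v') : ReachN A u v' (n + 1) := by
  obtain ⟨w, hw0, hwn, hws⟩ := h
  refine ⟨fun i => if i ≤ n then w i else v', by simpa using hw0, by simp, ?_⟩
  intro i hi
  rcases Nat.lt_or_ge i n with hin | hin
  · simp only [Nat.le_of_lt hin, if_pos, hin, Nat.succ_le_of_lt hin]
    exact hws i hin
  · have : i = n := Nat.le_antisymm (Nat.lt_succ_iff.mp hi) hin
    subst this
    simp only [le_refl, if_pos, Nat.not_le.mpr (Nat.lt_succ_self i), if_neg]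
    simpa [hwn]

/-! ### List helpers -/

lemma eraseIdx_append_right' (A B : List ℕ) (p : ℕ) :
    (A ++ B).eraseIdx (A.length + p) = A ++ B.eraseIdx p := by
  induction A with
  | nil => simp
  | cons a A ih => simpa [List.eraseIdx, Nat.succ_add] using ih

lemma mem_eraseIdx_of_ne {l : List ℕ} {a : ℕ} {p : ℕ} (hp : p < l.length)
    (ha : a ∈ l) (hne : l[p] ≠ a) : a ∈ l.eraseIdx p := by
  obtain ⟨q, hq, rfl⟩ := List.mem_iff_getElem.mp ha
  have hlen : (l.eraseIdx p).length = l.length - 1 := by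
    simp [List.length_eraseIdx, hp]
  rcases Nat.lt_or_ge q p with h | h
  · have hq' : q < (l.eraseIdx p).length := by omega
    have := List.getElem_eraseIdx (l := l) (i := p) (j := q) hq'
    rw [dif_pos h] at this
    exact this ▸ List.getElem_mem hq'
  · have hqp : p < q := lt_of_le_of_ne h (fun e => hne (by simp [e]))
    have hq' : q - 1 < (l.eraseIdx p).length := by omega
    have := List.getElem_eraseIdx (l := l) (i := p) (j := q - 1) hq'
    rw [dif_neg (by omega)] at this
    have hq1 : q - 1 + 1 = q := by omega
    simp only [hq1] at this
    exact this ▸ List.getElem_mem hq'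

lemma not_mem_eraseIdx_self {l : List ℕ} (hl : l.Nodup) {p : ℕ} (hp : p < l.length) :
    l[p] ∉ l.eraseIdx p := by
  intro hmem
  obtain ⟨q, hq, hqe⟩ := List.mem_iff_getElem.mp hmem
  have := List.getElem_eraseIdx (l := l) (i := p) (j := q) hq
  rw [this] at hqe
  split_ifs at hqe with h
  · exact absurd (hl.getElem_inj_iff.mp hqe) (by omega)
  · have : q + 1 < l.length := by
      have := List.length_eraseIdx (l := l) (i := p)
      rw [if_pos hp] at this
      omega
    exact absurd (hl.getElem_inj_iff.mp hqe) (by omega)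

lemma head_eq_one {R : List ℕ} (hR : R.Sublist (List.range' 1 D)) (h1 : 1 ∈ R) :
    ∃ h0 : 0 < R.length, R[0] = 1 := by
  have hsort : R.Pairwise (· < ·) := List.Pairwise.sublist hR (List.pairwise_lt_range' (s := 1) (n := D))
  obtain ⟨p, hp, hpe⟩ := List.mem_iff_getElem.mp h1
  have h0 : 0 < R.length := Nat.pos_of_ne_zero (by rintro h; rw [h] at hp; omega)
  refine ⟨h0, ?_⟩
  rcases Nat.eq_zero_or_pos p with rfl | hppos
  · exact hpe
  · exfalso
    have hlt : R[0] < R[p] := List.pairwise_iff_getElem.mp hsort 0 p h0 hp hppos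
    have : R[0] ∈ List.range' 1 D := hR.subset (List.getElem_mem h0)
    rw [List.mem_range'_1] at this
    omega

lemma one_mem_dropLast {R : List ℕ} (hR : R.Sublist (List.range' 1 D)) (h1 : 1 ∈ R)
    (hlen : 2 ≤ R.length) : 1 ∈ R.dropLast := by
  obtain ⟨h0, hR0⟩ := head_eq_one (D := D) hR h1
  have h0' : 0 < R.dropLast.length := by simp [List.length_dropLast]; omega
  have := List.getElem_dropLast h0'
  rw [hR0] at this
  exact this ▸ List.getElem_mem h0'

lemma nodup_bound_le {X : List ℕ} {E : List ℕ} (hE : E.Nodup) {m : ℕ}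
    (hm : m ≤ X.length) (h : ∀ v ∈ E, ∃ j, j < m ∧ X.getD j 0 = v) : E.length ≤ m := by
  classical
  have hsub : E.toFinset ⊆ (X.take m).toFinset := by
    intro v hv
    rw [List.mem_toFinset] at *
    obtain ⟨j, hj, hje⟩ := h v (by simpa using hv)
    have hjX : j < X.length := lt_of_lt_of_le hj hm
    rw [List.getD_eq_getElem _ _ hjX] at hje
    have hjt : j < (X.take m).length := by simp [List.length_take]; omega
    have : (X.take m)[j] = X[j] := List.getElem_take
    rw [← hje, ← this]
    exact List.getElem_mem hjt
  have := Finset.card_le_card hsub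
  rw [List.toFinset_card_of_nodup hE] at this
  calc E.length ≤ (X.take m).toFinset.card := this
    _ ≤ (X.take m).length := (X.take m).toFinset_card_le
    _ ≤ m := by simp [List.length_take]

lemma nodup_bound_eq {X : List ℕ} {E : List ℕ} (hE : E.Nodup) {m : ℕ}
    (hm : m ≤ X.length) (h : ∀ v ∈ E, ∃ j, j < m ∧ X.getD j 0 = v)
    (hlen : E.length = m) {i : ℕ} (hi : i < m) : X.getD i 0 ∈ E := by
  classical
  have hsub : E.toFinset ⊆ (X.take m).toFinset := by
    intro v hv
    rw [List.mem_toFinset] at *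
    obtain ⟨j, hj, hje⟩ := h v (by simpa using hv)
    have hjX : j < X.length := lt_of_lt_of_le hj hm
    rw [List.getD_eq_getElem _ _ hjX] at hje
    have hjt : j < (X.take m).length := by simp [List.length_take]; omega
    have : (X.take m)[j] = X[j] := List.getElem_take
    rw [← hje, ← this]
    exact List.getElem_mem hjt
  have htake : (X.take m).length = m := by simp [List.length_take]; omega
  have hcard : (X.take m).toFinset.card ≤ E.toFinset.card := by
    rw [List.toFinset_card_of_nodup hE, hlen]
    calc (X.take m).toFinset.card ≤ (X.take m).length := (X.take m).toFinset_card_le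
      _ = m := htake
  have heq := Finset.eq_of_subset_of_card_le hsub hcard
  have hiX : i < X.length := lt_of_lt_of_le hi hm
  have hit : i < (X.take m).length := by omega
  have hmem : X.getD i 0 ∈ (X.take m).toFinset := by
    rw [List.mem_toFinset, List.getD_eq_getElem _ _ hiX]
    have : (X.take m)[i] = X[i] := List.getElem_take
    exact this ▸ List.getElem_mem hit
  rw [← heq, List.mem_toFinset] at hmem
  exact hmem
/-! ### Move lemmas -/

lemma isVtx_range' {Δ D : ℕ} (hΔ : D ≤ Δ) : IsVtx Δ D (List.range' 1 D) := by
  refine ⟨by simp, List.nodup_range' (s := 1) (n := D), fun x hx => ?_⟩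
  rw [List.mem_range'_1] at hx
  omega

lemma adj_shift {Δ D r : ℕ} {W : List ℕ} (hW : IsVtx Δ D W) {v : ℕ} (hv : v ∉ W)
    (h1 : 1 ≤ v) (h2 : v ≤ Δ + 1) (hD : 1 ≤ D) :
    adjR Δ D r W (v :: W.dropLast) := by
  obtain ⟨hlen, hnd, hbd⟩ := hW
  have hdl : W.dropLast.Sublist W := List.dropLast_sublist W
  refine ⟨⟨hlen, hnd, hbd⟩, ⟨?_, ?_, ?_⟩, Or.inr ⟨v, hv, rfl⟩⟩
  · simp [List.length_dropLast, hlen]; omega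
  · exact List.nodup_cons.mpr ⟨fun h => hv (hdl.subset h), hnd.sublist hdl⟩
  · intro x hx
    rcases List.mem_cons.mp hx with rfl | hx
    · exact ⟨h1, h2⟩
    · exact hbd x (hdl.subset hx)

lemma adj_rot {Δ D r : ℕ} {W : List ℕ} (hW : IsVtx Δ D W) {j : ℕ}
    (hj1 : r + 1 ≤ j) (hj2 : j < D) :
    adjR Δ D r W (W.getD j 0 :: W.eraseIdx j) := by
  obtain ⟨hlen, hnd, hbd⟩ := hW
  have hjW : j < W.length := by omega
  have her : (W.eraseIdx j).Sublist W := List.eraseIdx_sublist W j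
  have hget : W.getD j 0 = W[j] := List.getD_eq_getElem W 0 hjW
  refine ⟨⟨hlen, hnd, hbd⟩, ⟨?_, ?_, ?_⟩, Or.inl ⟨j, hj1, hj2, rfl⟩⟩
  · simp [List.length_eraseIdx, hjW, hlen, hj2]; omega
  · refine List.nodup_cons.mpr ⟨?_, hnd.sublist her⟩
    rw [hget]; exact not_mem_eraseIdx_self hnd hjW
  · intro x hx
    rcases List.mem_cons.mp hx with rfl | hx
    · exact hbd _ (hget ▸ List.getElem_mem hjW)
    · exact hbd x (her.subset hx)

lemma eraseIdx_append_left' (A B : List ℕ) (q : ℕ) (h : q < A.length) :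
    (A ++ B).eraseIdx q = A.eraseIdx q ++ B := by
  induction A generalizing q with
  | nil => simp at h
  | cons a A ih =>
    cases q with
    | zero => simp [List.eraseIdx]
    | succ q => simp only [List.cons_append, List.eraseIdx_cons_succ, List.length_cons] at *
                rw [ih q (by omega)]

lemma getD_PER (P E R : List ℕ) (p : ℕ) (hp : p < R.length) :
    (P ++ (E ++ R)).getD (P.length + (E.length + p)) 0 = R[p] := by
  have h : P.length + (E.length + p) < (P ++ (E ++ R)).length := by
    simp [List.length_append]; omega
  rw [List.getD_eq_getElem _ _ h,
    List.getElem_append_right (by omega : P.length ≤ P.length + (E.length + p)),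
    List.getElem_append_right (by omega : E.length ≤ P.length + (E.length + p) - P.length)]
  congr 1
  omega

lemma getD_PE (P E R : List ℕ) (q : ℕ) (hq : q < E.length) :
    (P ++ (E ++ R)).getD (P.length + q) 0 = E[q] := by
  have h : P.length + q < (P ++ (E ++ R)).length := by
    simp [List.length_append]; omega
  rw [List.getD_eq_getElem _ _ h,
    List.getElem_append_right (by omega : P.length ≤ P.length + q),
    List.getElem_append_left (by omega : P.length + q - P.length < E.length)]
  congr 1
  omega

/-! ### The invariant for the countdown phase -/

structure CPInv (Δ D r : ℕ) (X : List ℕ) (c : ℕ) (k : ℕ) (E R : List ℕ) (n : ℕ) : Prop where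
  hk : k ≤ D - c
  hn : n ≤ r + (D - c - k)
  reach : ReachN (adjR Δ D r) (List.range' 1 D) ((X.take (D - c)).drop k ++ (E ++ R)) n
  vtx : IsVtx Δ D ((X.take (D - c)).drop k ++ (E ++ R))
  hR : R.Sublist (List.range' 1 D)
  hE : ∀ v ∈ E, ∃ j, j < k ∧ j + r + 1 < D - c ∧ X.getD j 0 = v
  hone : c = 1 → 1 ∈ R
  carry : ∀ j, j < k → D - c ≤ j + r + 1 →
      (X.getD j 0 = 1 → r + 2 + j + c ≤ E.length + D) ∧
      (∀ p (hp : p < R.length), R[p]'hp = X.getD j 0 → X.getD j 0 ≠ 1 →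
        r + 1 + k ≤ E.length + p + (D - c))

section Countdown

variable {Δ D r : ℕ} {X : List ℕ} {c : ℕ}

lemma countdown_step (hX : IsVtx Δ D X) (hc : c ≤ 1) (hc1 : c = 1 → X.getD (D - 1) 0 = 1)
    (hD : 2 * r + 2 ≤ D) {k : ℕ} {E R : List ℕ} {n : ℕ} (inv : CPInv Δ D r X c (k + 1) E R n) :
    ∃ E' R' , CPInv Δ D r X c k E' R' (n + 1) := by
  obtain ⟨hk, hn, reach, vtx, hR, hE, hone, carry⟩ := inv
  have hXlen : X.length = D := hX.1
  have hXnd : X.Nodup := hX.2.1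
  have htl : (X.take (D - c)).length = D - c := by simp [List.length_take, hXlen]
  have hkD : k < D - c := hk
  have hkX : k < X.length := by omega
  set v := X.getD k 0 with hv
  have hvk : v = X[k] := List.getD_eq_getElem X 0 hkX
  have hvmem : v ∈ X := hvk ▸ List.getElem_mem hkX
  have hvbd : 1 ≤ v ∧ v ≤ Δ + 1 := hX.2.2 v hvmem
  have hktl : k < (X.take (D - c)).length := by omega
  have hPcons : (X.take (D - c)).drop k = v :: (X.take (D - c)).drop (k + 1) := by
    rw [List.drop_eq_getElem_cons hktl]
    congr 1
    rw [hvk]; exact List.getElem_take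
  have hlenP'0 : ((X.take (D - c)).drop (k + 1)).length = D - c - (k + 1) := by
    simp [List.length_drop, htl]
  have hmemP' : ∀ u ∈ (X.take (D - c)).drop (k + 1),
      ∃ i, k + 1 ≤ i ∧ i < D - c ∧ X.getD i 0 = u := by
    intro u hu
    obtain ⟨i, hi, hie⟩ := List.mem_iff_getElem.mp hu
    rw [hlenP'0] at hi
    refine ⟨k + 1 + i, by omega, by omega, ?_⟩
    have hb : k + 1 + i < X.length := by omega
    rw [List.getD_eq_getElem _ _ hb, ← hie]
    rw [List.getElem_drop, List.getElem_take]
  have hvnotP : v ∉ (X.take (D - c)).drop (k + 1) := by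
    intro hmem
    obtain ⟨i, hi1, hi2, hie⟩ := hmemP' v hmem
    have hiX : i < X.length := by omega
    rw [List.getD_eq_getElem _ _ hiX] at hie
    rw [hvk] at hie
    have := hXnd.getElem_inj_iff.mp hie
    omega
  set P' := (X.take (D - c)).drop (k + 1) with hP'
  have hlenP' : P'.length = D - c - (k + 1) := hlenP'0
  set W := P' ++ (E ++ R) with hW
  have hlenW : W.length = D := vtx.1
  have hER : (D - c - (k + 1)) + (E.length + R.length) = D := by
    have := vtx.1
    simp only [hW, List.length_append, hlenP'] at this ⊢
    omega
  have hndW : W.Nodup := vtx.2.1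
  have hndER : (E ++ R).Nodup := hndW.sublist (List.sublist_append_right P' (E ++ R))
  have hndE : E.Nodup := hndER.sublist (List.sublist_append_left E R)
  have hdisj : ∀ a ∈ E, a ∉ R := fun a ha hr => (List.disjoint_of_nodup_append hndER) ha hr
  by_cases hvR : v ∈ R
  · -- rotate from the remnant R
    obtain ⟨p, hp, hpe⟩ := List.mem_iff_getElem.mp hvR
    set pos := (D - c - (k + 1)) + (E.length + p) with hpos
    have hposD : pos < D := by omega
    have hgetD : W.getD pos 0 = v := by
      rw [hW]
      have h2 : pos = P'.length + (E.length + p) := by rw [hlenP']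
      rw [h2, getD_PER P' E R p hp, hpe]
    have hpos1 : r + 1 ≤ pos := by
      by_cases hdanger : D - c ≤ k + r + 1
      · have hcar := carry k (Nat.lt_succ_self k) hdanger
        by_cases hv1 : v = 1
        · have := hcar.1 hv1
          omega
        · have := hcar.2 p hp hpe hv1
          omega
      · omega
    have hadj := adj_rot (r := r) vtx hpos1 hposD
    have herase : W.eraseIdx pos = P' ++ (E ++ R.eraseIdx p) := by
      have h1 : W = (P' ++ E) ++ R := by simp [hW]
      have h2 : pos = (P' ++ E).length + p := by
        simp only [List.length_append, hlenP']
        omega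
      rw [h1, h2, eraseIdx_append_right' (P' ++ E) R p, List.append_assoc]
    have hnew : W.getD pos 0 :: W.eraseIdx pos
        = (X.take (D - c)).drop k ++ (E ++ R.eraseIdx p) := by
      rw [hgetD, herase, hPcons]; rfl
    rw [hnew] at hadj
    have hlenRE : (R.eraseIdx p).length = R.length - 1 := by
      simp [List.length_eraseIdx, hp]
    refine ⟨E, R.eraseIdx p, ?_, ?_, ?_, ?_, ?_, ?_, ?_, ?_⟩
    · omega
    · omega
    · exact reachN_snoc reach hadj
    · exact hadj.2.1
    · exact (List.eraseIdx_sublist R p).trans hR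
    · intro v' hv'
      obtain ⟨j, hj, hjd, hje⟩ := hE v' hv'
      refine ⟨j, ?_, hjd, hje⟩
      rcases Nat.lt_or_ge j k with h | h
      · exact h
      · exfalso
        have : j = k := by omega
        subst this
        exact hdisj v' hv' (hje ▸ hvR)
    · intro hc1'
      refine mem_eraseIdx_of_ne hp (hone hc1') ?_
      rw [hpe]
      intro hveq
      have hD1 : D - 1 < X.length := by omega
      have : X.getD (D - 1) 0 = X[D - 1]'hD1 := List.getD_eq_getElem X 0 hD1
      have h1 : X[k] = X[D - 1]'hD1 := by
        rw [← hvk, hveq, ← this, hc1 hc1']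
      have := hXnd.getElem_inj_iff.mp h1
      omega
    · intro j hj hjd
      have hcar := carry j (by omega) hjd
      refine ⟨hcar.1, ?_⟩
      intro p' hp' hpe' hne1
      have := List.getElem_eraseIdx (l := R) (i := p) (j := p') hp'
      rw [hpe'] at this
      split_ifs at this with hpp
      · have := hcar.2 p' (by omega) this.symm hne1
        omega
      · have := hcar.2 (p' + 1) (by omega) this.symm hne1
        omega
  · by_cases hvE : v ∈ E
    · -- rotate from the extras E
      obtain ⟨j₀, hj₀, hj₀d, hj₀e⟩ := hE v hvE
      have hj₀k : j₀ = k := by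
        have hj₀X : j₀ < X.length := by omega
        have : X[j₀]'hj₀X = X[k] := by
          rw [← hvk, ← hj₀e]; exact (List.getD_eq_getElem X 0 hj₀X).symm
        exact hXnd.getElem_inj_iff.mp this
      have hksmall : k + r + 1 < D - c := hj₀k ▸ hj₀d
      obtain ⟨q, hq, hqe⟩ := List.mem_iff_getElem.mp hvE
      set pos := (D - c - (k + 1)) + q with hpos
      have hposD : pos < D := by omega
      have hgetD : W.getD pos 0 = v := by
        rw [hW]
        have h2 : pos = P'.length + q := by omega
        rw [h2, getD_PE P' E R q hq, hqe]
      have hpos1 : r + 1 ≤ pos := by omega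
      have hadj := adj_rot (r := r) vtx hpos1 hposD
      have herase : W.eraseIdx pos = P' ++ (E.eraseIdx q ++ R) := by
        have h2 : pos = P'.length + q := by omega
        rw [hW, h2]
        rw [show P' ++ (E ++ R) = P' ++ (E ++ R) from rfl]
        rw [eraseIdx_append_right' P' (E ++ R) q, eraseIdx_append_left' E R q hq]
      have hnew : W.getD pos 0 :: W.eraseIdx pos
          = (X.take (D - c)).drop k ++ (E.eraseIdx q ++ R) := by
        rw [hgetD, herase, hPcons]; rfl
      rw [hnew] at hadj
      have hvnot : v ∉ E.eraseIdx q := by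
        rw [← hqe]; exact not_mem_eraseIdx_self hndE hq
      refine ⟨E.eraseIdx q, R, ?_, ?_, ?_, ?_, ?_, ?_, ?_, ?_⟩
      · omega
      · omega
      · exact reachN_snoc reach hadj
      · exact hadj.2.1
      · exact hR
      · intro v' hv'
        have hv'E : v' ∈ E := (List.eraseIdx_sublist E q).subset hv'
        obtain ⟨j, hj, hjd, hje⟩ := hE v' hv'E
        refine ⟨j, ?_, hjd, hje⟩
        rcases Nat.lt_or_ge j k with h | h
        · exact h
        · exfalso
          have : j = k := by omega
          subst this
          rw [← hv] at hje
          exact hvnot (hje ▸ hv')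
      · exact hone
      · intro j hj hjd
        exfalso
        omega
    · -- v is absent from the word: shift
      have hvW : v ∉ W := by
        intro hmem
        rw [hW] at hmem
        rcases List.mem_append.mp hmem with h | h
        · exact hvnotP (hP' ▸ h)
        · rcases List.mem_append.mp h with h | h
          · exact hvE h
          · exact hvR h
      have hEk : ∀ v' ∈ E, ∃ j, j < k + 1 ∧ X.getD j 0 = v' := by
        intro v' hv'
        obtain ⟨j, hj, _, hje⟩ := hE v' hv'
        exact ⟨j, hj, hje⟩
      have hEbound : E.length ≤ k + 1 := nodup_bound_le hndE (by omega) hEk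
      have hRbig : c + 1 ≤ R.length := by
        by_contra hcon
        push_neg at hcon
        -- then E.length = k + 1 + (c - R.length) ≥ k + 1, so E.length = k + 1 and c = R.length … 
        have hEeq : E.length = k + 1 := by omega
        have := nodup_bound_eq hndE (by omega : k + 1 ≤ X.length) hEk hEeq
          (Nat.lt_succ_self k)
        exact hvE this
      have hRne : R ≠ [] := by
        intro h; rw [h] at hRbig; simp at hRbig
      have hadj := adj_shift (r := r) vtx hvW hvbd.1 hvbd.2 (by omega)
      have hdl : W.dropLast = P' ++ (E ++ R.dropLast) := by
        rw [hW, List.dropLast_append_of_ne_nil (by simp [hRne] : E ++ R ≠ []),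
          List.dropLast_append_of_ne_nil hRne]
      have hnew : v :: W.dropLast = (X.take (D - c)).drop k ++ (E ++ R.dropLast) := by
        rw [hdl, hPcons]; rfl
      rw [hnew] at hadj
      refine ⟨E, R.dropLast, ?_, ?_, ?_, ?_, ?_, ?_, ?_, ?_⟩
      · omega
      · omega
      · exact reachN_snoc reach hadj
      · exact hadj.2.1
      · exact (List.dropLast_sublist R).trans hR
      · intro v' hv'
        obtain ⟨j, hj, hjd, hje⟩ := hE v' hv'
        refine ⟨j, ?_, hjd, hje⟩
        rcases Nat.lt_or_ge j k with h | h
        · exact h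
        · exfalso
          have : j = k := by omega
          subst this
          rw [← hv] at hje
          exact hvE (hje ▸ hv')
      · intro hc1'
        have h2 : 2 ≤ R.length := by omega
        exact one_mem_dropLast (D := D) hR (hone hc1') h2
      · intro j hj hjd
        have hcar := carry j (by omega) hjd
        refine ⟨hcar.1, ?_⟩
        intro p' hp' hpe' hne1
        have hp'R : p' < R.length := by
          have := R.length_dropLast; omega
        have : R.dropLast[p']'hp' = R[p']'hp'R := List.getElem_dropLast hp'
        rw [this] at hpe'
        have := hcar.2 p' hp'R hpe' hne1
        omega

end Countdown

lemma countdown_full {Δ D r : ℕ} {X : List ℕ} {c : ℕ} (hX : IsVtx Δ D X) (hc : c ≤ 1)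
    (hc1 : c = 1 → X.getD (D - 1) 0 = 1) (hD : 2 * r + 2 ≤ D) :
    ∀ k E R n, CPInv Δ D r X c k E R n →
      ∃ m, m ≤ D + r ∧ ReachN (adjR Δ D r) (List.range' 1 D) X m := by
  intro k
  induction k with
  | zero =>
    intro E R n inv
    obtain ⟨hk, hn, reach, vtx, hR, hE, hone, _⟩ := inv
    have hXlen : X.length = D := hX.1
    have hEnil : E = [] := by
      rw [List.eq_nil_iff_forall_not_mem]
      intro v hv
      obtain ⟨j, hj, _⟩ := hE v hv
      omega
    subst hEnil
    have htl : (X.take (D - c)).length = D - c := by simp [List.length_take, hXlen]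
    have hlen := vtx.1
    simp only [List.length_append, List.length_drop, htl, List.nil_append,
      List.length_nil] at hlen
    -- hlen : (D - c - 0) + R.length = D
    have hRlen : R.length = c := by omega
    refine ⟨n, by omega, ?_⟩
    rcases Nat.le_one_iff_eq_zero_or_eq_one.mp hc with rfl | rfl
    · have hRnil : R = [] := List.eq_nil_of_length_eq_zero hRlen
      subst hRnil
      have htake : X.take (D - 0) = X := by
        rw [Nat.sub_zero, ← hXlen]; exact List.take_length
      rw [htake] at reach
      simpa using reach
    · obtain ⟨a, ha⟩ := List.length_eq_one_iff.mp hRlen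
      have ha1 : a = 1 := by
        have := hone rfl
        rw [ha] at this
        exact (List.mem_singleton.mp this).symm
      subst ha1
      have hD1 : D - 1 < X.length := by omega
      have hXsplit : X.take (D - 1) ++ [1] = X := by
        have h1 := List.take_append_drop (D - 1) X
        have h2 : X.drop (D - 1) = [1] := by
          rw [List.drop_eq_getElem_cons hD1]
          have h3 : X.drop (D - 1 + 1) = [] := List.drop_eq_nil_of_le (by omega)
          rw [h3]
          have h4 : X[D - 1]'hD1 = 1 := by
            rw [← List.getD_eq_getElem X 0 hD1]
            exact hc1 rfl
          rw [h4]
        rw [← h2]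
        exact h1
      rw [ha] at reach
      have : (X.take (D - 1)).drop 0 ++ ([] ++ [1]) = X := by
        simpa using hXsplit
      rwa [this] at reach
  | succ k ih =>
    intro E R n inv
    obtain ⟨E', R', inv'⟩ := countdown_step hX hc hc1 hD inv
    exact ih E' R' (n + 1) inv'

/-! ### The kernel (buffer-entering) phase -/

lemma length_filter_not (l : List ℕ) (p : ℕ → Bool) :
    (l.filter p).length + (l.filter (fun x => !(p x))).length = l.length := by
  induction l with
  | nil => simp
  | cons a l ih =>
    by_cases h : p a <;> simp [List.filter, h, ← ih] <;> omega

lemma getD_ER (E R : List ℕ) (p : ℕ) (hp : p < R.length) :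
    (E ++ R).getD (E.length + p) 0 = R[p] := by
  simpa using getD_PER [] E R p hp

structure KInv (Δ D r : ℕ) (X : List ℕ) (c : ℕ) (E R : List ℕ) : Prop where
  reach : ReachN (adjR Δ D r) (List.range' 1 D) (E ++ R) E.length
  vtx : IsVtx Δ D (E ++ R)
  hR : R.Sublist (List.range' 1 D)
  hE : ∀ v ∈ E, ∃ j, j + r + 1 < D - c ∧ X.getD j 0 = v
  hlen : E.length ≤ r
  hone : 1 ∈ R

def Blocked (D r : ℕ) (X : List ℕ) (c : ℕ) (E R : List ℕ) : Prop :=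
  ∀ j, j + r + 1 < D - c → X.getD j 0 ∉ E →
    ∃ p, ∃ hp : p < R.length, R[p]'hp = X.getD j 0 ∧ E.length + p ≤ r

lemma kernel_aux {Δ D r : ℕ} {X : List ℕ} {c : ℕ} (hX : IsVtx Δ D X)
    (hD : 2 * r + 2 ≤ D) :
    ∀ f E R, KInv Δ D r X c E R → r - E.length ≤ f →
      ∃ E' R', KInv Δ D r X c E' R' ∧ (E'.length = r ∨ Blocked D r X c E' R') := by
  intro f
  induction f with
  | zero =>
    intro E R kinv hf
    exact ⟨E, R, kinv, Or.inl (by have := kinv.hlen; omega)⟩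
  | succ f ih =>
    intro E R kinv hf
    obtain ⟨reach, vtx, hR, hE, hlen, hone⟩ := kinv
    by_cases hfull : E.length = r
    · exact ⟨E, R, ⟨reach, vtx, hR, hE, hlen, hone⟩, Or.inl hfull⟩
    have hElt : E.length < r := lt_of_le_of_ne hlen hfull
    by_cases hent : ∃ j, j + r + 1 < D - c ∧ X.getD j 0 ∉ E ∧
        (X.getD j 0 ∉ R ∨ ∃ p, ∃ hp : p < R.length,
          R[p]'hp = X.getD j 0 ∧ r + 1 ≤ E.length + p)
    · obtain ⟨j, hjd, hjE, hcase⟩ := hent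
      set v := X.getD j 0 with hv
      have hjX : j < X.length := by have := hX.1; omega
      have hvmem : v ∈ X := by
        rw [hv, List.getD_eq_getElem X 0 hjX]; exact List.getElem_mem hjX
      have hvbd : 1 ≤ v ∧ v ≤ Δ + 1 := hX.2.2 v hvmem
      have hlenER := vtx.1
      rw [List.length_append] at hlenER
      have hndER : (E ++ R).Nodup := vtx.2.1
      have hndR : R.Nodup := hndER.sublist (List.sublist_append_right E R)
      rcases hcase with habs | hdeep
      · -- v is absent: shift it in
        have hvW : v ∉ E ++ R := by
          intro h
          rcases List.mem_append.mp h with h | h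
          · exact hjE h
          · exact habs h
        have hRne : R ≠ [] := by
          intro h
          rw [h] at hone
          simp at hone
        have hadj := adj_shift (r := r) vtx hvW hvbd.1 hvbd.2 (by omega)
        have hdl : (E ++ R).dropLast = E ++ R.dropLast :=
          List.dropLast_append_of_ne_nil hRne
        rw [hdl] at hadj
        have hR2 : 2 ≤ R.length := by omega
        have kinv' : KInv Δ D r X c (v :: E) R.dropLast := by
          refine ⟨?_, ?_, ?_, ?_, ?_, ?_⟩
          · have := reachN_snoc reach hadj
            simpa using this
          · simpa using hadj.2.1
          · exact (List.dropLast_sublist R).trans hR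
          · intro v' hv'
            rcases List.mem_cons.mp hv' with rfl | hv'
            · exact ⟨j, hjd, rfl⟩
            · exact hE v' hv'
          · simpa using hElt
          · exact one_mem_dropLast (D := D) hR hone hR2
        exact ih (v :: E) R.dropLast kinv' (by simp; omega)
      · -- v is deep in R: rotate it to the front
        obtain ⟨p, hp, hpe, hpdeep⟩ := hdeep
        set pos := E.length + p with hpos
        have hposD : pos < D := by omega
        have hgetD : (E ++ R).getD pos 0 = v := by
          rw [hpos, getD_ER E R p hp, hpe]
        have hadj := adj_rot (r := r) vtx hpdeep hposD
        rw [hgetD, hpos, eraseIdx_append_right' E R p] at hadj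
        have hvne1 : v ≠ 1 := by
          intro hveq
          obtain ⟨h0, hR0⟩ := head_eq_one (D := D) hR hone
          have : p = 0 := hndR.getElem_inj_iff.mp (by rw [hpe, hveq, hR0])
          omega
        have kinv' : KInv Δ D r X c (v :: E) (R.eraseIdx p) := by
          refine ⟨?_, ?_, ?_, ?_, ?_, ?_⟩
          · have := reachN_snoc reach hadj
            simpa using this
          · simpa using hadj.2.1
          · exact (List.eraseIdx_sublist R p).trans hR
          · intro v' hv'
            rcases List.mem_cons.mp hv' with rfl | hv'
            · exact ⟨j, hjd, rfl⟩
            · exact hE v' hv'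
          · simpa using hElt
          · exact mem_eraseIdx_of_ne hp hone (by rw [hpe]; exact fun h => hvne1 h)
        exact ih (v :: E) (R.eraseIdx p) kinv' (by simp; omega)
    · -- no enterable pool value: blocked
      push_neg at hent
      refine ⟨E, R, ⟨reach, vtx, hR, hE, hlen, hone⟩, Or.inr ?_⟩
      intro j hjd hjE
      obtain ⟨hmemR, hshallow⟩ := hent j hjd hjE
      obtain ⟨p, hp, hpe⟩ := List.mem_iff_getElem.mp hmemR
      exact ⟨p, hp, hpe, by have := hshallow p hp hpe; omega⟩

/-! ### Pigeonhole analysis of the blocked case -/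

lemma pigeon {Δ D r : ℕ} {X : List ℕ} {c : ℕ} (hX : IsVtx Δ D X) (hc : c ≤ 1)
    (hc1 : c = 1 → X.getD (D - 1) 0 = 1) (hD : 2 * r + 2 ≤ D) {E R : List ℕ}
    (kinv : KInv Δ D r X c E R) (hb : Blocked D r X c E R) :
    (c = 0 → ∃ j', j' + r + 1 < D - c ∧ X.getD j' 0 = 1) ∧
    (∀ j p (hp : p < R.length), j < D - c → D - c ≤ j + r + 1 → R[p]'hp = X.getD j 0 →
      X.getD j 0 ≠ 1 → r + 1 ≤ E.length + p) := by
  classical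
  obtain ⟨reach, vtx, hR, hE, hlen, hone⟩ := kinv
  have hXlen : X.length = D := hX.1
  have hXnd : X.Nodup := hX.2.1
  set m := D - c - r - 1 with hm
  have hmlb : r + 1 - c ≤ m := by omega
  have hmub : m + r + 1 ≤ D := by omega
  set PV := (List.range m).map (fun i => X.getD i 0) with hPV
  have hPVlen : PV.length = m := by simp [hPV]
  have hgetDinj : ∀ x y, x < D → y < D → X.getD x 0 = X.getD y 0 → x = y := by
    intro x y hx hy hxy
    have hxX : x < X.length := by omega
    have hyX : y < X.length := by omega
    rw [List.getD_eq_getElem X 0 hxX, List.getD_eq_getElem X 0 hyX] at hxy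
    exact hXnd.getElem_inj_iff.mp hxy
  have hPVnd : PV.Nodup := by
    refine List.Nodup.map_on ?_ List.nodup_range
    intro x hx y hy hxy
    rw [List.mem_range] at hx hy
    exact hgetDinj x y (by omega) (by omega) hxy
  have hndER : (E ++ R).Nodup := vtx.2.1
  have hndE : E.Nodup := hndER.sublist (List.sublist_append_left E R)
  have hndR : R.Nodup := hndER.sublist (List.sublist_append_right E R)
  have hlenER := vtx.1
  rw [List.length_append] at hlenER
  have hEPV : ∀ v ∈ E, v ∈ PV := by
    intro v hv
    obtain ⟨j, hjd, hje⟩ := hE v hv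
    rw [hPV, List.mem_map]
    exact ⟨j, List.mem_range.mpr (by omega), hje⟩
  set U := PV.filter (fun v => !decide (v ∈ E)) with hU
  have hUlen : U.length = m - E.length := by
    have h1 : (PV.filter (fun v => decide (v ∈ E))).toFinset = E.toFinset := by
      ext a
      simp only [List.mem_toFinset, List.mem_filter, decide_eq_true_eq]
      exact ⟨fun h => h.2, fun h => ⟨hEPV a h, h⟩⟩
    have h2 : (PV.filter (fun v => decide (v ∈ E))).length = E.length := by
      have hnd1 : (PV.filter (fun v => decide (v ∈ E))).Nodup := hPVnd.filter _
      rw [← List.toFinset_card_of_nodup hnd1, ← List.toFinset_card_of_nodup hndE, h1]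
    have h3 := length_filter_not PV (fun v => decide (v ∈ E))
    rw [h2, hPVlen] at h3
    rw [hU]
    omega
  have hUsub : ∀ v ∈ U, v ∈ PV ∧ v ∉ E := by
    intro v hv
    rw [hU, List.mem_filter] at hv
    simpa using hv
  have hUnd : U.Nodup := hPVnd.filter _
  set q := r - E.length with hq
  set T := R.take (q + 1) with hT
  have hTlen : T.length = q + 1 := by
    rw [hT]
    simp only [List.length_take]
    omega
  have hTnd : T.Nodup := hndR.sublist (List.take_sublist (q + 1) R)
  have hmemT : ∀ p, p ≤ q → ∀ hp : p < R.length, R[p]'hp ∈ T := by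
    intro p hpq hp
    have hpT : p < T.length := by omega
    have : T[p]'hpT = R[p]'hp := List.getElem_take
    rw [← this]
    exact List.getElem_mem hpT
  obtain ⟨h0, hR0⟩ := head_eq_one (D := D) hR hone
  have h1T : 1 ∈ T := by
    have := hmemT 0 (by omega) h0
    rwa [hR0] at this
  have hUT : ∀ v ∈ U, v ∈ T := by
    intro v hv
    obtain ⟨hvPV, hvE⟩ := hUsub v hv
    rw [hPV, List.mem_map] at hvPV
    obtain ⟨i, hi, hie⟩ := hvPV
    rw [List.mem_range] at hi
    obtain ⟨p, hp, hpe, hple⟩ := hb i (by omega) (hie ▸ hvE)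
    rw [hie] at hpe
    have := hmemT p (by omega) hp
    rwa [hpe] at this
  -- the "not in U" fact for danger indices
  have hdangerU : ∀ j, j < D - c → D - c ≤ j + r + 1 → X.getD j 0 ∉ U := by
    intro j hj hjd hmem
    obtain ⟨hvPV, _⟩ := hUsub _ hmem
    rw [hPV, List.mem_map] at hvPV
    obtain ⟨i, hi, hie⟩ := hvPV
    rw [List.mem_range] at hi
    have : i = j := hgetDinj i j (by omega) (by omega) hie
    omega
  by_cases hcase : 1 ∈ U
  · -- 1 is an unused pool value; forces c = 0 and m = r + 1
    obtain ⟨hPV1, hE1⟩ := hUsub 1 hcase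
    rw [hPV, List.mem_map] at hPV1
    obtain ⟨i0, hi0, hi0e⟩ := hPV1
    rw [List.mem_range] at hi0
    have hc0 : c = 0 := by
      by_contra hne
      have hc1' : c = 1 := by omega
      have := hc1 hc1'
      have : i0 = D - 1 := hgetDinj i0 (D - 1) (by omega) (by omega) (by rw [hi0e, this])
      omega
    have hUsubT : U.toFinset ⊆ T.toFinset := by
      intro a ha
      rw [List.mem_toFinset] at *
      exact hUT a ha
    have hcard1 : U.toFinset.card = m - E.length := by
      rw [List.toFinset_card_of_nodup hUnd, hUlen]
    have hcard2 : T.toFinset.card = q + 1 := by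
      rw [List.toFinset_card_of_nodup hTnd, hTlen]
    have hmle : m - E.length ≤ q + 1 := by
      rw [← hcard1, ← hcard2]
      exact Finset.card_le_card hUsubT
    have hmeq : m = r + 1 := by omega
    have hseteq : U.toFinset = T.toFinset :=
      Finset.eq_of_subset_of_card_le hUsubT (by omega)
    refine ⟨fun _ => ⟨i0, by omega, hi0e⟩, ?_⟩
    intro j p hp hj hjd hpe hne1
    have hnotU : X.getD j 0 ∉ U := hdangerU j hj hjd
    have hnotT : X.getD j 0 ∉ T := by
      intro hmem
      have : X.getD j 0 ∈ U.toFinset := by rw [hseteq, List.mem_toFinset]; exact hmem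
      rw [List.mem_toFinset] at this
      exact hnotU this
    by_contra hcon
    push_neg at hcon
    have hpq : p ≤ q := by omega
    have := hmemT p hpq hp
    rw [hpe] at this
    exact hnotT this
  · -- 1 is not in U : forces c = 1 and m = r
    set L := 1 :: U with hL
    have hLnd : L.Nodup := List.nodup_cons.mpr ⟨hcase, hUnd⟩
    have hLT : ∀ v ∈ L, v ∈ T := by
      intro v hv
      rcases List.mem_cons.mp hv with rfl | hv
      · exact h1T
      · exact hUT v hv
    have hLsubT : L.toFinset ⊆ T.toFinset := by
      intro a ha
      rw [List.mem_toFinset] at *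
      exact hLT a ha
    have hcard1 : L.toFinset.card = 1 + (m - E.length) := by
      rw [List.toFinset_card_of_nodup hLnd]
      simp [hL, hUlen]
      omega
    have hcard2 : T.toFinset.card = q + 1 := by
      rw [List.toFinset_card_of_nodup hTnd, hTlen]
    have hmle : 1 + (m - E.length) ≤ q + 1 := by
      rw [← hcard1, ← hcard2]
      exact Finset.card_le_card hLsubT
    have hc1' : c = 1 := by omega
    have hmeq : m = r := by omega
    have hseteq : L.toFinset = T.toFinset :=
      Finset.eq_of_subset_of_card_le hLsubT (by omega)
    refine ⟨fun h => by omega, ?_⟩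
    intro j p hp hj hjd hpe hne1
    have hnotU : X.getD j 0 ∉ U := hdangerU j hj hjd
    have hnotL : X.getD j 0 ∉ L := by
      intro hmem
      rcases List.mem_cons.mp hmem with h | h
      · exact hne1 h
      · exact hnotU h
    have hnotT : X.getD j 0 ∉ T := by
      intro hmem
      have : X.getD j 0 ∈ L.toFinset := by rw [hseteq, List.mem_toFinset]; exact hmem
      rw [List.mem_toFinset] at this
      exact hnotL this
    by_contra hcon
    push_neg at hcon
    have hpq : p ≤ q := by omega
    have := hmemT p hpq hp
    rw [hpe] at this
    exact hnotT this

/-! ### Assembly: kernel output gives the countdown invariant at `k = D - c` -/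

lemma kernel_to_inv {Δ D r : ℕ} {X : List ℕ} {c : ℕ} (hX : IsVtx Δ D X) (hc : c ≤ 1)
    (hc1 : c = 1 → X.getD (D - 1) 0 = 1) (hc0 : c = 0 → X.getD (D - 1) 0 ≠ 1)
    (hD : 2 * r + 2 ≤ D) (hΔ : D ≤ Δ) :
    ∃ E R n, CPInv Δ D r X c (D - c) E R n := by
  have hXlen : X.length = D := hX.1
  have hXnd : X.Nodup := hX.2.1
  have hgetDinj : ∀ x y, x < D → y < D → X.getD x 0 = X.getD y 0 → x = y := by
    intro x y hx hy hxy
    have hxX : x < X.length := by omega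
    have hyX : y < X.length := by omega
    rw [List.getD_eq_getElem X 0 hxX, List.getD_eq_getElem X 0 hyX] at hxy
    exact hXnd.getElem_inj_iff.mp hxy
  have start : KInv Δ D r X c [] (List.range' 1 D) := by
    refine ⟨?_, ?_, List.Sublist.refl _, ?_, by simp, ?_⟩
    · simpa using reachN_refl (adjR Δ D r) (List.range' 1 D)
    · simpa using isVtx_range' hΔ
    · intro v hv; simp at hv
    · rw [List.mem_range'_1]; omega
  obtain ⟨E, R, kinv, hcases⟩ := kernel_aux hX hD r [] (List.range' 1 D) start (by simp)
  refine ⟨E, R, E.length, ?_⟩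
  have hpig := fun hb => pigeon hX hc hc1 hD kinv hb
  obtain ⟨reach, vtx, hR, hE, hlen, hone⟩ := kinv
  have hdrop : (X.take (D - c)).drop (D - c) = [] :=
    List.drop_eq_nil_of_le (by simp [List.length_take])
  refine ⟨le_refl _, by omega, ?_, ?_, hR, ?_, fun _ => hone, ?_⟩
  · rw [hdrop]; simpa using reach
  · rw [hdrop]; simpa using vtx
  · intro v hv
    obtain ⟨j, hjd, hje⟩ := hE v hv
    exact ⟨j, by omega, hjd, hje⟩
  · intro j hj hjd
    constructor
    · -- the X[j] = 1 branch
      intro hj1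
      have hjD1 : j ≠ D - 1 := by
        intro h
        rcases Nat.le_one_iff_eq_zero_or_eq_one.mp hc with h0 | h1
        · exact hc0 h0 (h ▸ hj1)
        · omega
      have hjle : j + 2 ≤ D := by omega
      have hc0' : c = 0 := by
        rcases Nat.le_one_iff_eq_zero_or_eq_one.mp hc with h0 | h1
        · exact h0
        · exfalso
          have hXD1 := hc1 h1
          have : j = D - 1 := hgetDinj j (D - 1) (by omega) (by omega) (by rw [hj1, hXD1])
          exact hjD1 this
      rcases hcases with hfull | hblocked
      · omega
      · obtain ⟨hA, _⟩ := hpig hblocked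
        obtain ⟨j', hj'd, hj'e⟩ := hA hc0'
        exfalso
        have : j' = j := hgetDinj j' j (by omega) (by omega) (by rw [hj1, hj'e])
        omega
    · -- the X[j] ≠ 1 branch
      intro p hp hpe hne1
      have hgoal : r + 1 ≤ E.length + p → r + 1 + (D - c) ≤ E.length + p + (D - c) := by omega
      apply hgoal
      rcases hcases with hfull | hblocked
      · -- full: p ≥ 1 since R[0] = 1 ≠ X[j]
        obtain ⟨h0, hR0⟩ := head_eq_one (D := D) hR hone
        have hpne0 : p ≠ 0 := by
          intro h
          subst h
          rw [hpe] at hR0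
          exact hne1 hR0
        omega
      · obtain ⟨_, hB⟩ := hpig hblocked
        exact hB j p hp hj hjd hpe hne1

/-- for `Δ ≥ D ≥ 2r+2`, from the standard origin `I = 12⋯D` every
vertex can be reached by a directed walk of length at most `D + r`. -/
theorem cpn_restricted_diameter_ub (Δ D r : ℕ) (hD : 2 * r + 2 ≤ D) (hΔ : D ≤ Δ)
    (X : List ℕ) (hX : IsVtx Δ D X) :
    ∃ n ≤ D + r, ∃ w, IsWalk (adjR Δ D r) (List.range' 1 D) X n w := by
  classical
  set c := if X.getD (D - 1) 0 = 1 then 1 else 0 with hcdef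
  have hc : c ≤ 1 := by rw [hcdef]; split_ifs <;> omega
  have hc1 : c = 1 → X.getD (D - 1) 0 = 1 := by
    intro h
    by_contra hne
    rw [hcdef, if_neg hne] at h
    omega
  have hc0 : c = 0 → X.getD (D - 1) 0 ≠ 1 := by
    intro h hcontra
    rw [hcdef, if_pos hcontra] at h
    omega
  obtain ⟨E, R, n, inv⟩ := kernel_to_inv hX hc hc1 hc0 hD hΔ
  obtain ⟨m, hm, w, hw⟩ := countdown_full hX hc hc1 hD (D - c) E R n inv
  exact ⟨m, hm, w, hw⟩
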